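/- For the system matrix A and each t with 2 ≤ t ≤ m, the t-th row sum of B = Aᵀ satisfies B_{tt} + ∑_{k≠t} B_{tk} = −q^{m-(t-1)}; in particular each such row sum is strictly negative when q > 0. -/
import Mathlib


open Finset

/-- Treatment probability matrix entry `P(i,j)`. -/
noncomputable def Ptreat (m : ℕ) (q : ℝ) (i j : ℕ) : ℝ :=
  if i ≤ j then ((m - i).choose (j - i) : ℝ) * q ^ (j - i) * (1 - q) ^ (m - j) else 0

/-- Repair probability matrix entry `R(i,j)`. -/
noncomputable def Rrep (m : ℕ) (r : ℝ) (i j : ℕ) : ℝ :=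
  if i = m then (if j = m then 1 else 0)
  else if j ≤ i then (i.choose j : ℝ) * r ^ (i - j) * (1 - r) ^ j else 0

/-- One-day transition matrix `Π = P·R`. -/
noncomputable def Pimat (m : ℕ) (q r : ℝ) (i j : ℕ) : ℝ :=
  ∑ k ∈ Finset.range (m + 1), Ptreat m q i k * Rrep m r k j

/-- The `m × m` system matrix `A(q,r)` (0-based indices `i = t-1`). -/
noncomputable def Amat (m : ℕ) (q r μ : ℝ) : Matrix (Fin m) (Fin m) ℝ :=
  fun t k =>
    if t = k then
      (if (t : ℕ) = 0 then Pimat m q r 0 0 + μ * (1 - q) ^ m - 1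
       else Pimat m q r t t - 1)
    else Pimat m q r k t

lemma Rrep_row_sum (m : ℕ) (r : ℝ) (k : ℕ) (hk : k ≤ m) :
    ∑ j ∈ Finset.range (m + 1), Rrep m r k j = 1 := by
  by_cases h : k = m
  · subst h
    simp [Rrep, Finset.sum_ite_eq' (Finset.range (k+1)) k]
  · have hk' : k < m := lt_of_le_of_ne hk h
    have hsub : Finset.range (k + 1) ⊆ Finset.range (m + 1) := by
      apply Finset.range_subset_range.2; omega
    rw [← Finset.sum_subset hsub]
    · have := add_pow (1 - r) r k
      simp only [sub_add_cancel, one_pow] at this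
      rw [Finset.sum_congr rfl (fun j hj => ?_), ← this]
      rw [Rrep, if_neg h, if_pos (by simpa using Nat.lt_succ_iff.1 (Finset.mem_range.1 hj))]
      ring
    · intro j _ hj
      rw [Rrep, if_neg h, if_neg]
      simp only [Finset.mem_range] at hj; omega

lemma Ptreat_row_sum (m : ℕ) (q : ℝ) (i : ℕ) (hi : i ≤ m) :
    ∑ j ∈ Finset.range (m + 1), Ptreat m q i j = 1 := by
  rw [Finset.range_eq_Ico, ← Finset.sum_Ico_consecutive _ (Nat.zero_le i) (by omega : i ≤ m + 1)]
  have h1 : ∑ j ∈ Finset.Ico 0 i, Ptreat m q i j = 0 := by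
    apply Finset.sum_eq_zero
    intro j hj
    simp only [Finset.mem_Ico] at hj
    rw [Ptreat, if_neg (by omega)]
  rw [h1, zero_add, Finset.sum_Ico_eq_sum_range]
  have key : ∀ s ∈ Finset.range (m + 1 - i), Ptreat m q i (i + s) =
      q ^ s * (1 - q) ^ (m - i - s) * ((m - i).choose s : ℝ) := by
    intro s hs
    simp only [Finset.mem_range] at hs
    rw [Ptreat, if_pos (by omega)]
    have e1 : i + s - i = s := by omega
    have e2 : m - (i + s) = m - i - s := by omega
    rw [e1, e2]; ring
  rw [Finset.sum_congr rfl key]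
  have hmi : m + 1 - i = (m - i) + 1 := by omega
  rw [hmi, ← add_pow q (1 - q) (m - i)]
  simp

lemma Pimat_row_sum (m : ℕ) (q r : ℝ) (i : ℕ) (hi : i ≤ m) :
    ∑ j ∈ Finset.range (m + 1), Pimat m q r i j = 1 := by
  unfold Pimat
  rw [Finset.sum_comm]
  rw [Finset.sum_congr rfl (fun k hk => ?_)]
  · exact Ptreat_row_sum m q i hi
  · rw [← Finset.mul_sum, Rrep_row_sum m r k (by
      simpa using Nat.lt_succ_iff.1 (Finset.mem_range.1 hk)), mul_one]

lemma Pimat_last (m : ℕ) (q r : ℝ) (i : ℕ) (hi : i ≤ m) :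
    Pimat m q r i m = q ^ (m - i) := by
  unfold Pimat
  have key : ∀ k ∈ Finset.range (m + 1),
      Ptreat m q i k * Rrep m r k m = if k = m then Ptreat m q i m else 0 := by
    intro k hk
    by_cases h : k = m
    · subst h; simp [Rrep]
    · have hkm : k < m := by have := Finset.mem_range.1 hk; omega
      rw [Rrep, if_neg h, if_neg (by omega), mul_zero, if_neg h]
  rw [Finset.sum_congr rfl key, Finset.sum_ite_eq' (Finset.range (m+1)) m,
    if_pos (by simp)]
  rw [Ptreat, if_pos hi]
  simp

/-- for `2 ≤ t ≤ m` (0-based `1 ≤ t`), the `t`-th row sum of `B = Aᵀ`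
equals `-q^(m-(t-1))` and is strictly negative. -/
theorem later_row_sums_transpose (m : ℕ) (hm : 2 ≤ m) (q r μ : ℝ)
    (hq0 : 0 < q) (hq1 : q < 1) (hr0 : 0 < r) (hr1 : r < 1)
    (hμ0 : 0 < μ) (hμ1 : μ ≤ 1) :
    ∀ t : Fin m, 1 ≤ (t : ℕ) →
      (∑ k : Fin m, (Amat m q r μ).transpose t k = -q ^ (m - (t : ℕ))) ∧
      (∑ k : Fin m, (Amat m q r μ).transpose t k < 0) := by
  intro t ht
  have key : ∑ k : Fin m, (Amat m q r μ).transpose t k = -q ^ (m - (t : ℕ)) := by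
    have step1 : ∀ k : Fin m, (Amat m q r μ).transpose t k =
        Pimat m q r t k - (if k = t then 1 else 0) := by
      intro k
      simp only [Matrix.transpose_apply, Amat]
      by_cases h : k = t
      · subst h
        rw [if_pos rfl, if_pos rfl, if_neg (by omega)]
      · rw [if_neg h, if_neg h, sub_zero]
    rw [Finset.sum_congr rfl (fun k _ => step1 k), Finset.sum_sub_distrib]
    have h2 : ∑ k : Fin m, (if k = t then (1:ℝ) else 0) = 1 := by simp
    have h3 : ∑ k : Fin m, Pimat m q r t k = ∑ j ∈ Finset.range m, Pimat m q r t j := by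
      rw [Fin.sum_univ_eq_sum_range]
    have h4 : ∑ j ∈ Finset.range (m + 1), Pimat m q r t j = 1 :=
      Pimat_row_sum m q r t (le_of_lt t.isLt)
    rw [Finset.sum_range_succ] at h4
    rw [h2, h3, Pimat_last m q r t (le_of_lt t.isLt)] at *
    have : ∑ j ∈ Finset.range m, Pimat m q r t j = 1 - q ^ (m - (t:ℕ)) := by linarith
    rw [this]; ring
  refine ⟨key, ?_⟩
  rw [key]
  have : (0:ℝ) < q ^ (m - (t:ℕ)) := pow_pos hq0 _
  linarith
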